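/- Let a, b ∈ ℝ³ be unit vectors and let A, B be the qubit observables with eigenprojectors P^a_± = (I ± a·σ)/2 and P^b_± = (I ± b·σ)/2. Then sup over 2×2 density matrices ρ of [1 − (Σ_{j∈{+,−}} √( Tr[P^b_j ρ] · Σ_{i∈{+,−}} Tr[P^a_i ρ] Tr[P^a_i P^b_j] ) )²] = (1/2)(1 − (a·b)²), and the supremum is attained at ρ = P^b_+ (an eigenstate of B). Consequently Q_F(A→B) = Q_F(B→A) = (1/2)(1 − (a·b)²) and Q_F(A,B) = (1/4)(1 − (a·b)²). -/

import Mathlib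

open Matrix
open scoped BigOperators ComplexOrder

/-- a·σ = a₁σ_x + a₂σ_y + a₃σ_z. -/
noncomputable def pauliDot (v : Fin 3 → ℝ) : Matrix (Fin 2) (Fin 2) ℂ :=
  (v 0 : ℂ) • !![0, 1; 1, 0] + (v 1 : ℂ) • !![0, -Complex.I; Complex.I, 0]
    + (v 2 : ℂ) • !![1, 0; 0, -1]

/-- Eigenprojectors P^a_± = (I ± a·σ)/2; `blochProj a true = P^a_+`. -/
noncomputable def blochProj (v : Fin 3 → ℝ) (s : Bool) : Matrix (Fin 2) (Fin 2) ℂ :=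
  (1 / 2 : ℂ) • (1 + (if s then 1 else -1 : ℂ) • pauliDot v)

/-- 1 − F(p_ρ^B, q_ρ^{A→B})² for a qubit state ρ and observables with Bloch vectors a, b. -/
noncomputable def qubitInfid (a b : Fin 3 → ℝ) (ρ : Matrix (Fin 2) (Fin 2) ℂ) : ℝ :=
  1 - (∑ j : Bool, Real.sqrt (((blochProj b j * ρ).trace).re *
      (∑ i : Bool, ((blochProj a i * ρ).trace).re
        * ((blochProj a i * blochProj b j).trace).re))) ^ 2

/-- The set of values 1 − F(p_ρ^B, q_ρ^{A→B})² over qubit density matrices ρ;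
`Q_F(A→B)` is its supremum. -/
noncomputable def qubitQFset (a b : Fin 3 → ℝ) : Set ℝ :=
  {x | ∃ ρ : Matrix (Fin 2) (Fin 2) ℂ, ρ.PosSemidef ∧ ρ.trace = 1 ∧ x = qubitInfid a b ρ}


lemma trace_pd_mul (v : Fin 3 → ℝ) (ρ : Matrix (Fin 2) (Fin 2) ℂ) (hH : ρ.IsHermitian) :
    (pauliDot v * ρ).trace = ((v 0 * (2*(ρ 0 1).re) + v 1 * (-2*(ρ 0 1).im)
      + v 2 * ((ρ 0 0).re - (ρ 1 1).re) : ℝ) : ℂ) := by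
  have h10 : ρ 1 0 = (starRingEnd ℂ) (ρ 0 1) := (hH.apply 1 0).symm
  have h00 : ρ 0 0 = ((ρ 0 0).re : ℂ) := (hH.coe_re_apply_self 0).symm
  have h11 : ρ 1 1 = ((ρ 1 1).re : ℂ) := (hH.coe_re_apply_self 1).symm
  simp only [pauliDot, Matrix.trace, Matrix.mul_apply, Fin.sum_univ_two, Matrix.diag,
    Matrix.add_apply, Matrix.smul_apply, Matrix.cons_val', Matrix.cons_val_zero,
    Matrix.cons_val_one, Matrix.head_cons, Matrix.head_fin_const, Matrix.empty_val',
    Matrix.cons_val_fin_one, smul_eq_mul]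
  rw [h10, h00, h11]
  apply Complex.ext <;>
    simp [Complex.add_re, Complex.mul_re, Complex.mul_im, Complex.conj_re, Complex.conj_im] <;>
    ring

lemma trace_pd (v : Fin 3 → ℝ) : (pauliDot v).trace = 0 := by
  simp [pauliDot, Matrix.trace, Fin.sum_univ_two, Matrix.diag]

lemma trace_pd_pd (a b : Fin 3 → ℝ) :
    (pauliDot a * pauliDot b).trace = ((2 * ∑ i, a i * b i : ℝ) : ℂ) := by
  simp only [pauliDot, Matrix.trace, Matrix.mul_apply, Fin.sum_univ_two, Fin.sum_univ_three,
    Matrix.diag, Matrix.add_apply, Matrix.smul_apply, Matrix.cons_val', Matrix.cons_val_zero,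
    Matrix.cons_val_one, Matrix.head_cons, Matrix.head_fin_const, Matrix.empty_val',
    Matrix.cons_val_fin_one, smul_eq_mul]
  apply Complex.ext <;>
    simp [Complex.add_re, Complex.mul_re, Complex.mul_im] <;> ring

noncomputable def bloch (ρ : Matrix (Fin 2) (Fin 2) ℂ) : Fin 3 → ℝ :=
  ![2*(ρ 0 1).re, -2*(ρ 0 1).im, (ρ 0 0).re - (ρ 1 1).re]

lemma trace_bp_mul (v : Fin 3 → ℝ) (ρ : Matrix (Fin 2) (Fin 2) ℂ) (hH : ρ.IsHermitian)
    (htr : ρ.trace = 1) (s : Bool) :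
    ((blochProj v s * ρ).trace).re
      = (1 + (if s then 1 else -1 : ℝ) * ∑ i, v i * bloch ρ i)/2 := by
  have hsum : ∑ i, v i * bloch ρ i
      = v 0 * (2*(ρ 0 1).re) + v 1 * (-2*(ρ 0 1).im) + v 2 * ((ρ 0 0).re - (ρ 1 1).re) := by
    simp [Fin.sum_univ_three, bloch]; try ring
  rw [blochProj, smul_mul_assoc, add_mul, one_mul, smul_mul_assoc, trace_smul, trace_add,
    trace_smul, htr, trace_pd_mul v ρ hH, hsum]
  cases s <;> simp <;> try ring

lemma trace_bp_bp (a b : Fin 3 → ℝ) (i j : Bool) :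
    ((blochProj a i * blochProj b j).trace).re
      = (1 + ((if i then 1 else -1 : ℝ) * (if j then 1 else -1 : ℝ)) * ∑ k, a k * b k)/2 := by
  have expand : blochProj a i * blochProj b j
      = (1/4 : ℂ) • ((1 : Matrix (Fin 2) (Fin 2) ℂ)
        + (if j then 1 else -1 : ℂ) • pauliDot b + (if i then 1 else -1 : ℂ) • pauliDot a
        + ((if i then 1 else -1 : ℂ) * (if j then 1 else -1 : ℂ)) • (pauliDot a * pauliDot b)) := by
    rw [blochProj, blochProj]
    rw [smul_mul_assoc, mul_smul_comm]
    rw [add_mul, one_mul, mul_add, mul_one, smul_mul_assoc, smul_add, mul_smul_comm]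
    module
  rw [expand]
  rw [trace_smul, trace_add, trace_add, trace_add, trace_smul, trace_smul, trace_smul,
    trace_pd, trace_pd, trace_pd_pd, Matrix.trace_one]
  cases i <;> cases j <;> simp <;> try ring

lemma trace_re_one (ρ : Matrix (Fin 2) (Fin 2) ℂ) (htr : ρ.trace = 1) :
    (ρ 0 0).re + (ρ 1 1).re = 1 := by
  have : (ρ.trace).re = 1 := by rw [htr]; simp
  simpa [Matrix.trace, Fin.sum_univ_two, Matrix.diag, Complex.add_re] using this

lemma bloch_norm_le (ρ : Matrix (Fin 2) (Fin 2) ℂ) (h : ρ.PosSemidef) (htr : ρ.trace = 1) :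
    ∑ i, bloch ρ i ^ 2 ≤ 1 := by
  have hH := h.1
  have h10 : ρ 1 0 = star (ρ 0 1) := (hH.apply 1 0).symm
  have h00 : ρ 0 0 = ((ρ 0 0).re : ℂ) := (hH.coe_re_apply_self 0).symm
  have h11 : ρ 1 1 = ((ρ 1 1).re : ℂ) := (hH.coe_re_apply_self 1).symm
  set x := (ρ 0 0).re
  set y := (ρ 1 1).re
  have e1 : dotProduct (star ![-(ρ 0 1), ρ 0 0]) (ρ *ᵥ ![-(ρ 0 1), ρ 0 0])
      = ((x*(x*y - ((ρ 0 1).re^2+(ρ 0 1).im^2)) : ℝ) : ℂ) := by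
    simp only [dotProduct, Matrix.mulVec, Fin.sum_univ_two, Pi.star_apply,
      Matrix.cons_val_zero, Matrix.cons_val_one, Matrix.head_cons, star_neg]
    rw [h10, h00, h11]
    apply Complex.ext <;>
      simp [Complex.add_re, Complex.mul_re, Complex.mul_im, Complex.conj_re, Complex.conj_im,
        ← Complex.ofReal_pow] <;> try ring
  have e2 : dotProduct (star ![ρ 1 1, -(ρ 1 0)]) (ρ *ᵥ ![ρ 1 1, -(ρ 1 0)])
      = ((y*(x*y - ((ρ 0 1).re^2+(ρ 0 1).im^2)) : ℝ) : ℂ) := by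
    simp only [dotProduct, Matrix.mulVec, Fin.sum_univ_two, Pi.star_apply,
      Matrix.cons_val_zero, Matrix.cons_val_one, Matrix.head_cons, star_neg]
    rw [h10, h00, h11]
    apply Complex.ext <;>
      simp [Complex.add_re, Complex.mul_re, Complex.mul_im, Complex.conj_re, Complex.conj_im,
        ← Complex.ofReal_pow] <;> try ring
  have q1 : (0:ℝ) ≤ x*(x*y - ((ρ 0 1).re^2+(ρ 0 1).im^2)) := by
    have := h.dotProduct_mulVec_nonneg ![-(ρ 0 1), ρ 0 0]
    rw [e1] at this
    exact_mod_cast this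
  have q2 : (0:ℝ) ≤ y*(x*y - ((ρ 0 1).re^2+(ρ 0 1).im^2)) := by
    have := h.dotProduct_mulVec_nonneg ![ρ 1 1, -(ρ 1 0)]
    rw [e2] at this
    exact_mod_cast this
  have hre : x + y = 1 := trace_re_one ρ htr
  have hD : (0:ℝ) ≤ x*y - ((ρ 0 1).re^2+(ρ 0 1).im^2) := by nlinarith
  simp only [Fin.sum_univ_three, bloch, Matrix.cons_val_zero, Matrix.cons_val_one,
    Matrix.head_cons, Matrix.cons_val_two, Matrix.tail_cons]
  nlinarith [sq_nonneg ((ρ 0 1).re), sq_nonneg ((ρ 0 1).im)]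

lemma key_ineq (c t u : ℝ) (hc : c^2 ≤ 1) (ht : t^2 ≤ 1) (hu : u^2 ≤ 1)
    (hcs : (u - c*t)^2 ≤ (1 - c^2)*(1 - t^2)) :
    c^2 ≤ t*(c*u) + Real.sqrt ((1 - t^2)*(1 - (c*u)^2)) := by
  have hX : (0:ℝ) ≤ (1 - t^2)*(1 - (c*u)^2) := by nlinarith
  set w := Real.sqrt ((1 - t^2)*(1 - (c*u)^2)) with hw
  have hwnn : 0 ≤ w := Real.sqrt_nonneg _
  have hwsq : w^2 = (1 - t^2)*(1 - (c*u)^2) := Real.sq_sqrt hX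
  have hq : (c^2 - c*t*u)^2 ≤ w^2 := by
    nlinarith [mul_le_mul_of_nonneg_left hcs (sq_nonneg c),
      mul_nonneg (sub_nonneg.2 ht) (sub_nonneg.2 hc)]
  nlinarith [hq, hwnn]

lemma cs_three (f g : Fin 3 → ℝ) :
    (∑ i, f i * g i)^2 ≤ (∑ i, f i ^ 2) * (∑ i, g i ^ 2) :=
  Finset.sum_mul_sq_le_sq_mul_sq Finset.univ f g


lemma infid_val (a b : Fin 3 → ℝ) (ρ : Matrix (Fin 2) (Fin 2) ℂ) (hH : ρ.IsHermitian)
    (htr : ρ.trace = 1) (t u c : ℝ) (htv : ∑ i, b i * bloch ρ i = t)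
    (huv : ∑ i, a i * bloch ρ i = u) (hcv : ∑ i, a i * b i = c) :
    qubitInfid a b ρ = 1 - (Real.sqrt ((1+t)/2 * ((1+c*u)/2))
      + Real.sqrt ((1-t)/2 * ((1-c*u)/2)))^2 := by
  have hpbT : ((blochProj b true * ρ).trace).re = (1+t)/2 := by
    rw [trace_bp_mul b ρ hH htr, htv]; norm_num
  have hpbF : ((blochProj b false * ρ).trace).re = (1-t)/2 := by
    rw [trace_bp_mul b ρ hH htr, htv]; norm_num; ring_nf
  have hpaT : ((blochProj a true * ρ).trace).re = (1+u)/2 := by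
    rw [trace_bp_mul a ρ hH htr, huv]; norm_num
  have hpaF : ((blochProj a false * ρ).trace).re = (1-u)/2 := by
    rw [trace_bp_mul a ρ hH htr, huv]; norm_num; ring_nf
  have hqT : (∑ i : Bool, ((blochProj a i * ρ).trace).re
      * ((blochProj a i * blochProj b true).trace).re) = (1+c*u)/2 := by
    rw [Fintype.sum_bool, hpaT, hpaF, trace_bp_bp a b true true, trace_bp_bp a b false true, hcv]
    norm_num; ring
  have hqF : (∑ i : Bool, ((blochProj a i * ρ).trace).re
      * ((blochProj a i * blochProj b false).trace).re) = (1-c*u)/2 := by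
    rw [Fintype.sum_bool, hpaT, hpaF, trace_bp_bp a b true false, trace_bp_bp a b false false, hcv]
    norm_num; ring
  unfold qubitInfid
  rw [Fintype.sum_bool, hqT, hqF, hpbT, hpbF, add_comm]

lemma trace_bp (v : Fin 3 → ℝ) (s : Bool) : (blochProj v s).trace = 1 := by
  rw [blochProj, trace_smul, trace_add, trace_smul, trace_pd, trace_one]
  simp

lemma bp_herm (v : Fin 3 → ℝ) (s : Bool) : (blochProj v s).IsHermitian := by
  unfold Matrix.IsHermitian
  ext i j
  fin_cases i <;> fin_cases j <;>
    cases s <;>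
    simp [blochProj, pauliDot, Matrix.conjTranspose_apply, Matrix.one_apply,
      Complex.ext_iff] <;> ring

lemma bp_psd (v : Fin 3 → ℝ) (hv : ∑ i, v i ^ 2 = 1) (s : Bool) :
    (blochProj v s).PosSemidef := by
  refine Matrix.PosSemidef.of_dotProduct_mulVec_nonneg (bp_herm v s) (fun x => ?_)
  set p := x 0 with hp
  set q := x 1 with hq
  set n : ℝ := p.re^2 + p.im^2 + q.re^2 + q.im^2 with hn
  set m : Fin 3 → ℝ := ![2*(p.re*q.re + p.im*q.im), 2*(p.re*q.im - p.im*q.re),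
    (p.re^2+p.im^2) - (q.re^2+q.im^2)] with hm
  have hmsq : ∑ i, m i ^ 2 = n^2 := by
    simp [hm, Fin.sum_univ_three, hn]; ring
  have hcs := cs_three v m
  rw [hv, one_mul, hmsq] at hcs
  have hnn : 0 ≤ n := by positivity
  have habs : |∑ i, v i * m i| ≤ n := by
    rw [abs_le]
    constructor <;> nlinarith [hcs]
  have e : dotProduct (star x) (blochProj v s *ᵥ x)
      = (((1/2) * (n + (if s then 1 else -1 : ℝ) * ∑ i, v i * m i) : ℝ) : ℂ) := by
    simp only [blochProj, pauliDot, Matrix.mulVec, dotProduct, Fin.sum_univ_two,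
      Fin.sum_univ_three, Pi.star_apply, Matrix.smul_apply, Matrix.add_apply,
      Matrix.one_apply, Matrix.cons_val', Matrix.cons_val_zero, Matrix.cons_val_one,
      Matrix.head_cons, Matrix.empty_val', Matrix.cons_val_fin_one, smul_eq_mul, hm]
    rw [← hp, ← hq]
    cases s <;>
      apply Complex.ext <;>
      simp [Complex.add_re, Complex.add_im, Complex.mul_re, Complex.mul_im, Complex.conj_re,
        Complex.conj_im, ← Complex.ofReal_pow] <;>
      ring
  rw [e]
  rw [Complex.zero_le_real]
  have : |(if s then 1 else -1 : ℝ) * ∑ i, v i * m i| ≤ n := by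
    cases s <;> simp [abs_mul, habs] <;> simpa [abs_le] using abs_le.mp habs
  nlinarith [abs_le.mp this]

lemma bloch_bp (v : Fin 3 → ℝ) : bloch (blochProj v true) = v := by
  funext i
  fin_cases i <;>
    simp [bloch, blochProj, pauliDot, Matrix.add_apply, Matrix.smul_apply, Matrix.one_apply,
      Complex.add_re, Complex.add_im, Complex.mul_re, Complex.mul_im] <;> ring

lemma real_bound (a b r : Fin 3 → ℝ) (c t u : ℝ)
    (ha : ∑ i, a i ^ 2 = 1) (hb : ∑ i, b i ^ 2 = 1) (hr : ∑ i, r i ^ 2 ≤ 1)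
    (hc : c = ∑ i, a i * b i) (ht : t = ∑ i, b i * r i) (hu : u = ∑ i, a i * r i) :
    c^2 ≤ t*(c*u) + Real.sqrt ((1 - t^2)*(1 - (c*u)^2)) := by
  have hc2 : c^2 ≤ 1 := by
    have := cs_three a b; rw [ha, hb, hc] at *; simpa using this
  have ht2 : t^2 ≤ 1 := by
    have := cs_three b r; rw [hb] at this; rw [ht]; nlinarith
  have hu2 : u^2 ≤ 1 := by
    have := cs_three a r; rw [ha] at this; rw [hu]; nlinarith
  refine key_ineq c t u hc2 ht2 hu2 ?_
  have H := cs_three (fun i => a i - c * b i) (fun i => r i - t * b i)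
  have e1 : ∑ i, (a i - c * b i) * (r i - t * b i) = u - c*t := by
    simp only [Fin.sum_univ_three] at ha hb hc ht hu ⊢
    linear_combination -hu + t*hc + c*ht + c*t*hb
  have e2 : ∑ i, (a i - c * b i) ^ 2 = 1 - c^2 := by
    simp only [Fin.sum_univ_three] at ha hb hc ⊢
    linear_combination ha + c^2*hb + 2*c*hc
  have e3 : ∑ i, (r i - t * b i) ^ 2 = (∑ i, r i ^ 2) - t^2 := by
    simp only [Fin.sum_univ_three] at hb ht ⊢
    linear_combination t^2*hb + 2*t*ht
  rw [e1, e2, e3] at H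
  calc (u - c*t)^2 ≤ (1 - c^2) * ((∑ i, r i ^ 2) - t^2) := H
    _ ≤ (1 - c^2) * (1 - t^2) := by nlinarith


lemma infid_le (a b : Fin 3 → ℝ) (ha : ∑ i, a i ^ 2 = 1) (hb : ∑ i, b i ^ 2 = 1)
    (ρ : Matrix (Fin 2) (Fin 2) ℂ) (h : ρ.PosSemidef) (htr : ρ.trace = 1) :
    qubitInfid a b ρ ≤ (1/2)*(1 - (∑ i, a i * b i)^2) := by
  have hr := bloch_norm_le ρ h htr
  rw [infid_val a b ρ h.1 htr (∑ i, b i * bloch ρ i) (∑ i, a i * bloch ρ i)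
    (∑ i, a i * b i) rfl rfl rfl]
  set c := ∑ i, a i * b i with hc
  set t := ∑ i, b i * bloch ρ i with ht
  set u := ∑ i, a i * bloch ρ i with hu
  have hkey := real_bound a b (bloch ρ) c t u ha hb hr hc ht hu
  have hc2 : c^2 ≤ 1 := by
    have := cs_three a b; rw [ha, hb, ← hc] at this; simpa using this
  have ht2 : t^2 ≤ 1 := by
    have := cs_three b (bloch ρ); rw [hb, ← ht] at this; nlinarith
  have hu2 : u^2 ≤ 1 := by
    have := cs_three a (bloch ρ); rw [ha, ← hu] at this; nlinarith
  have hs2 : (c*u)^2 ≤ 1 := by nlinarith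
  have h1 : (0:ℝ) ≤ (1+t)/2 := by nlinarith [sq_nonneg (1+t)]
  have h2 : (0:ℝ) ≤ (1+c*u)/2 := by nlinarith [sq_nonneg (1+c*u)]
  have h3 : (0:ℝ) ≤ (1-t)/2 := by nlinarith [sq_nonneg (1-t)]
  have h4 : (0:ℝ) ≤ (1-c*u)/2 := by nlinarith [sq_nonneg (1-c*u)]
  set A := Real.sqrt ((1+t)/2 * ((1+c*u)/2)) with hA
  set B := Real.sqrt ((1-t)/2 * ((1-c*u)/2)) with hB
  have hA2 : A^2 = (1+t)/2 * ((1+c*u)/2) := Real.sq_sqrt (mul_nonneg h1 h2)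
  have hB2 : B^2 = (1-t)/2 * ((1-c*u)/2) := Real.sq_sqrt (mul_nonneg h3 h4)
  have hAB : A*B = Real.sqrt ((1-t^2)*(1-(c*u)^2))/4 := by
    rw [hA, hB, ← Real.sqrt_mul (mul_nonneg h1 h2)]
    rw [show (1+t)/2 * ((1+c*u)/2) * ((1-t)/2 * ((1-c*u)/2))
        = (1/4)^2 * ((1-t^2)*(1-(c*u)^2)) by ring]
    rw [Real.sqrt_mul (by positivity), Real.sqrt_sq (by norm_num : (0:ℝ) ≤ 1/4)]
    ring
  have hexp : (A+B)^2 = A^2 + 2*(A*B) + B^2 := by ring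
  rw [hexp, hA2, hB2, hAB]
  nlinarith [hkey]

lemma infid_eig (a b : Fin 3 → ℝ) (hb : ∑ i, b i ^ 2 = 1) :
    qubitInfid a b (blochProj b true) = (1/2)*(1 - (∑ i, a i * b i)^2) := by
  have htv : ∑ i, b i * bloch (blochProj b true) i = 1 := by
    rw [bloch_bp]
    rw [show ∑ i, b i * b i = ∑ i, b i ^ 2 from Finset.sum_congr rfl fun i _ => (sq (b i)).symm]
    exact hb
  have huv : ∑ i, a i * bloch (blochProj b true) i = ∑ i, a i * b i := by rw [bloch_bp]
  rw [infid_val a b (blochProj b true) (bp_herm b true) (trace_bp b true)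
    1 (∑ i, a i * b i) (∑ i, a i * b i) htv huv rfl]
  set c := ∑ i, a i * b i with hc
  rw [show ((1:ℝ)-1)/2 * ((1-c*c)/2) = 0 by ring, Real.sqrt_zero, add_zero,
    show ((1:ℝ)+1)/2 * ((1+c*c)/2) = (1+c^2)/2 by ring,
    Real.sq_sqrt (by positivity)]
  ring

theorem qubit_QF (a b : Fin 3 → ℝ)
    (ha : ∑ i, a i ^ 2 = 1) (hb : ∑ i, b i ^ 2 = 1) :
    IsGreatest (qubitQFset a b) ((1 / 2) * (1 - (∑ i, a i * b i) ^ 2)) ∧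
    qubitInfid a b (blochProj b true) = (1 / 2) * (1 - (∑ i, a i * b i) ^ 2) ∧
    IsGreatest (qubitQFset b a) ((1 / 2) * (1 - (∑ i, a i * b i) ^ 2)) ∧
    (1 / 4) * (sSup (qubitQFset a b) + sSup (qubitQFset b a))
      = (1 / 4) * (1 - (∑ i, a i * b i) ^ 2) := by
  have hcc : (∑ i, b i * a i) = ∑ i, a i * b i :=
    Finset.sum_congr rfl fun i _ => mul_comm _ _
  have hG1 : IsGreatest (qubitQFset a b) ((1 / 2) * (1 - (∑ i, a i * b i) ^ 2)) := by
    constructor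
    · exact ⟨blochProj b true, bp_psd b hb true, trace_bp b true, (infid_eig a b hb).symm⟩
    · rintro x ⟨ρ, h1, h2, rfl⟩
      exact infid_le a b ha hb ρ h1 h2
  have hG2 : IsGreatest (qubitQFset b a) ((1 / 2) * (1 - (∑ i, a i * b i) ^ 2)) := by
    constructor
    · refine ⟨blochProj a true, bp_psd a ha true, trace_bp a true, ?_⟩
      have := infid_eig b a ha
      rw [hcc] at this
      exact this.symm
    · rintro x ⟨ρ, h1, h2, rfl⟩
      have := infid_le b a hb ha ρ h1 h2
      rwa [hcc] at this
  refine ⟨hG1, infid_eig a b hb, hG2, ?_⟩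
  rw [hG1.csSup_eq, hG2.csSup_eq]
  ring
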